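/- arXiv:1110.4896 — 3 statements merged into one kernel-verified Lean document; each statement's English description precedes it below -/
import Mathlib

section
/- Suppose Δ₀ is an integer such that every digon-free digraph D with ⌈Δ̃(D)⌉ = Δ₀ satisfies χ(D) ≤ Δ₀ − 1. Then there exists a positive constant α < 1 such that every digon-free digraph D with ⌈Δ̃(D)⌉ ≥ Δ₀ satisfies χ(D) ≤ α · ⌈Δ̃(D)⌉. -/
set_option linter.unusedSectionVars false


/-- A set `A` of vertices of a digraph (given by its arc relation `Adj`) is *acyclic*
if the subdigraph induced on `A` contains no directed cycle; equivalently, no vertex of `A`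
lies on a closed directed walk all of whose vertices are in `A`. -/
def AcyclicSet {V : Type*} (Adj : V → V → Prop) (A : Set V) : Prop :=
  ∀ v ∈ A, ¬ Relation.TransGen (fun x y => x ∈ A ∧ y ∈ A ∧ Adj x y) v v

/-- A digraph is `k`-colorable if its vertex set can be partitioned into `k` acyclic sets. -/
def DiColorable {V : Type*} (Adj : V → V → Prop) (k : ℕ) : Prop :=
  ∃ f : V → Fin k, ∀ i : Fin k, AcyclicSet Adj {v | f v = i}

/-- The chromatic number of a digraph: the least `k` admitting a partition of the
vertex set into `k` acyclic sets. -/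
noncomputable def dichromNum {V : Type*} (Adj : V → V → Prop) : ℕ :=
  sInf {k | DiColorable Adj k}

/-- A digraph is digon-free if it has no directed cycle of length two. -/
def DigonFree {V : Type*} (Adj : V → V → Prop) : Prop :=
  ∀ u v, Adj u v → ¬ Adj v u

/-- The out-degree of a vertex. -/
noncomputable def outDeg {V : Type*} (Adj : V → V → Prop) (v : V) : ℕ :=
  Nat.card {u // Adj v u}

/-- The in-degree of a vertex. -/
noncomputable def inDeg {V : Type*} (Adj : V → V → Prop) (v : V) : ℕ :=
  Nat.card {u // Adj u v}

/-- `Δ̃(D)`: the maximum geometric mean of the out-degree and in-degree of a vertex. -/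
noncomputable def tildeDelta {V : Type*} [Fintype V] (Adj : V → V → Prop) : ℝ :=
  ⨆ v : V, Real.sqrt ((outDeg Adj v : ℝ) * (inDeg Adj v : ℝ))

/-- The underlying undirected graph of a digraph. -/
def underGraph {V : Type*} (Adj : V → V → Prop) : SimpleGraph V where
  Adj a b := a ≠ b ∧ (Adj a b ∨ Adj b a)
  symm := ⟨fun _ _ h => ⟨h.1.symm, h.2.symm⟩⟩
  loopless := ⟨fun _ h => h.1 rfl⟩

open Relation Finset

section Rel
variable {V : Type*}

/-- subset of an acyclic set is acyclic -/
lemma acyclic_mono {Adj : V → V → Prop} {A B : Set V} (hBA : A ⊆ B)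
    (hB : AcyclicSet Adj B) : AcyclicSet Adj A := by
  intro v hv hT
  exact hB v (hBA hv) (TransGen.mono (fun x y hxy => ⟨hBA hxy.1, hBA hxy.2.1, hxy.2.2⟩) _ _ hT)

lemma acyclic_empty {Adj : V → V → Prop} : AcyclicSet Adj (∅ : Set V) := by
  intro v hv; exact absurd hv (Set.notMem_empty v)

/-- decomposition of a transgen path relative to a distinguished vertex v -/
lemma decomp {r : V → V → Prop} {v a b : V} (h : TransGen r a b) :
    TransGen (fun x y => r x y ∧ x ≠ v ∧ y ≠ v) a b ∨
      (ReflTransGen r a v ∧ ReflTransGen r v b) := by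
  induction h with
  | single hab =>
    rename_i c
    by_cases ha : a = v
    · exact Or.inr ⟨by rw [ha], ReflTransGen.single (ha ▸ hab)⟩
    · by_cases hc : c = v
      · exact Or.inr ⟨ReflTransGen.single (hc ▸ hab), by rw [hc]⟩
      · exact Or.inl (TransGen.single ⟨hab, ha, hc⟩)
  | tail hab hr ih =>
    rename_i b' c
    rcases ih with ih | ⟨h1, h2⟩
    · by_cases hb' : b' = v
      · exact Or.inr ⟨(TransGen.mono (fun x y hxy => hxy.1) _ _ ih).to_reflTransGen.trans
          (by rw [hb']), ReflTransGen.single (hb' ▸ hr)⟩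
      · by_cases hc : c = v
        · exact Or.inr ⟨((TransGen.mono (fun x y hxy => hxy.1) _ _ ih).to_reflTransGen).trans
            (ReflTransGen.single (hc ▸ hr) : ReflTransGen _ b' v), by rw [hc]⟩
        · exact Or.inl (ih.tail ⟨hr, hb', hc⟩)
    · exact Or.inr ⟨h1, h2.tail hr⟩

/-- inserting a vertex with no out-neighbour in A keeps acyclicity -/
lemma acyclic_insert_no_out {Adj : V → V → Prop} {A : Set V} {v : V}
    (hA : AcyclicSet Adj A) (hvv : ¬ Adj v v) (hout : ∀ u ∈ A, ¬ Adj v u) :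
    AcyclicSet Adj (insert v A) := by
  intro w hw hT
  rcases decomp (v := v) hT with hL | ⟨h1, h2⟩
  · obtain ⟨y, hy, -⟩ := TransGen.head'_iff.mp hL
    have hwv : w ≠ v := hy.2.1
    have hwA : w ∈ A := (Set.mem_insert_iff.mp hw).resolve_left hwv
    refine hA w hwA (TransGen.mono ?_ _ _ hL)
    rintro x y ⟨⟨hx, hy', hxy⟩, hxv, hyv⟩
    exact ⟨(Set.mem_insert_iff.mp hx).resolve_left hxv,
      (Set.mem_insert_iff.mp hy').resolve_left hyv, hxy⟩
  · have hTv : TransGen (fun x y => x ∈ insert v A ∧ y ∈ insert v A ∧ Adj x y) v v :=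
      (TransGen.trans_right h2 hT).trans_left h1
    obtain ⟨u, hu, -⟩ := TransGen.head'_iff.mp hTv
    rcases Set.mem_insert_iff.mp hu.2.1 with huv | huA
    · exact hvv (huv ▸ hu.2.2)
    · exact hout u huA hu.2.2

lemma acyclic_insert_no_in {Adj : V → V → Prop} {A : Set V} {v : V}
    (hA : AcyclicSet Adj A) (hvv : ¬ Adj v v) (hin : ∀ u ∈ A, ¬ Adj u v) :
    AcyclicSet Adj (insert v A) := by
  intro w hw hT
  rcases decomp (v := v) hT with hL | ⟨h1, h2⟩
  · obtain ⟨y, hy, -⟩ := TransGen.head'_iff.mp hL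
    have hwv : w ≠ v := hy.2.1
    have hwA : w ∈ A := (Set.mem_insert_iff.mp hw).resolve_left hwv
    refine hA w hwA (TransGen.mono ?_ _ _ hL)
    rintro x y ⟨⟨hx, hy', hxy⟩, hxv, hyv⟩
    exact ⟨(Set.mem_insert_iff.mp hx).resolve_left hxv,
      (Set.mem_insert_iff.mp hy').resolve_left hyv, hxy⟩
  · have hTv : TransGen (fun x y => x ∈ insert v A ∧ y ∈ insert v A ∧ Adj x y) v v :=
      (TransGen.trans_right h2 hT).trans_left h1
    obtain ⟨u, -, hu⟩ := TransGen.tail'_iff.mp hTv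
    rcases Set.mem_insert_iff.mp hu.1 with huv | huA
    · exact hvv (huv ▸ hu.2.2)
    · exact hin u huA hu.2.2

lemma exists_nbrs_of_not_acyclic_insert {Adj : V → V → Prop} {A : Set V} {v : V}
    (hA : AcyclicSet Adj A) (hvv : ¬ Adj v v)
    (hni : ¬ AcyclicSet Adj (insert v A)) :
    (∃ u ∈ A, Adj v u) ∧ (∃ u ∈ A, Adj u v) := by
  constructor
  · by_contra hc; push_neg at hc
    exact hni (acyclic_insert_no_out hA hvv hc)
  · by_contra hc; push_neg at hc
    exact hni (acyclic_insert_no_in hA hvv hc)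

end Rel
section Col
variable {V : Type*} [Fintype V] (Adj : V → V → Prop)

/-- out-degree into a set -/
noncomputable def odeg (S : Set V) (v : V) : ℕ := Nat.card {u // u ∈ S ∧ Adj v u}

/-- in-degree from a set -/
noncomputable def ideg (S : Set V) (v : V) : ℕ := Nat.card {u // u ∈ S ∧ Adj u v}

variable {Adj}

lemma odeg_eq_ncard (S : Set V) (v : V) : odeg Adj S v = {u | u ∈ S ∧ Adj v u}.ncard :=
  Nat.card_coe_set_eq _

lemma ideg_eq_ncard (S : Set V) (v : V) : ideg Adj S v = {u | u ∈ S ∧ Adj u v}.ncard :=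
  Nat.card_coe_set_eq _

lemma odeg_mono {T S : Set V} (hTS : T ⊆ S) (v : V) : odeg Adj T v ≤ odeg Adj S v := by
  rw [odeg_eq_ncard, odeg_eq_ncard]
  exact Set.ncard_le_ncard (fun u hu => ⟨hTS hu.1, hu.2⟩) (Set.toFinite _)

lemma ideg_mono {T S : Set V} (hTS : T ⊆ S) (v : V) : ideg Adj T v ≤ ideg Adj S v := by
  rw [ideg_eq_ncard, ideg_eq_ncard]
  exact Set.ncard_le_ncard (fun u hu => ⟨hTS hu.1, hu.2⟩) (Set.toFinite _)

lemma odeg_drop {S A : Set V} (hAS : A ⊆ S) {v u₀ : V} (hu₀ : u₀ ∈ A) (hadj : Adj v u₀) :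
    odeg Adj (S \ A) v + 1 ≤ odeg Adj S v := by
  rw [odeg_eq_ncard, odeg_eq_ncard]
  have hss : {u | u ∈ S \ A ∧ Adj v u} ⊂ {u | u ∈ S ∧ Adj v u} := by
    constructor
    · exact fun u hu => ⟨hu.1.1, hu.2⟩
    · intro hsub
      exact (hsub ⟨hAS hu₀, hadj⟩).1.2 hu₀
  exact Nat.succ_le_of_lt (Set.ncard_lt_ncard hss (Set.toFinite _))

lemma ideg_drop {S A : Set V} (hAS : A ⊆ S) {v u₀ : V} (hu₀ : u₀ ∈ A) (hadj : Adj u₀ v) :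
    ideg Adj (S \ A) v + 1 ≤ ideg Adj S v := by
  rw [ideg_eq_ncard, ideg_eq_ncard]
  have hss : {u | u ∈ S \ A ∧ Adj u v} ⊂ {u | u ∈ S ∧ Adj u v} := by
    constructor
    · exact fun u hu => ⟨hu.1.1, hu.2⟩
    · intro hsub
      exact (hsub ⟨hAS hu₀, hadj⟩).1.2 hu₀
  exact Nat.succ_le_of_lt (Set.ncard_lt_ncard hss (Set.toFinite _))

variable (Adj)

/-- colorability of a vertex subset with `k` colors -/
def ColOn (S : Set V) (k : ℕ) : Prop :=
  ∃ f : V → ℕ, (∀ v ∈ S, f v < k) ∧ ∀ i : ℕ, AcyclicSet Adj {v | v ∈ S ∧ f v = i}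

variable {Adj}

lemma colOn_mono_k {S : Set V} {k m : ℕ} (hkm : k ≤ m) (h : ColOn Adj S k) :
    ColOn Adj S m := by
  obtain ⟨f, hb, hc⟩ := h
  exact ⟨f, fun v hv => lt_of_lt_of_le (hb v hv) hkm, hc⟩

lemma colOn_anti {T S : Set V} (hTS : T ⊆ S) {k : ℕ} (h : ColOn Adj S k) :
    ColOn Adj T k := by
  obtain ⟨f, hb, hc⟩ := h
  refine ⟨f, fun v hv => hb v (hTS hv), fun i => ?_⟩
  exact acyclic_mono (B := {v | v ∈ S ∧ f v = i}) (fun v hv => ⟨hTS hv.1, hv.2⟩) (hc i)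

lemma colOn_empty (k : ℕ) : ColOn Adj (∅ : Set V) k := by
  refine ⟨fun _ => 0, fun v hv => absurd hv (Set.notMem_empty v), fun i => ?_⟩
  refine acyclic_mono (B := (∅ : Set V)) (fun v hv => hv.1) acyclic_empty

lemma colOn_of_acyclic {S : Set V} (h : AcyclicSet Adj S) : ColOn Adj S 1 := by
  refine ⟨fun _ => 0, fun v _ => Nat.zero_lt_one, fun i => ?_⟩
  exact acyclic_mono (fun v hv => hv.1) h

lemma colOn_union {A B : Set V} {a b : ℕ} (hd : Disjoint A B)
    (hA : ColOn Adj A a) (hB : ColOn Adj B b) : ColOn Adj (A ∪ B) (a + b) := by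
  classical
  obtain ⟨f, hfb, hfc⟩ := hA
  obtain ⟨g, hgb, hgc⟩ := hB
  refine ⟨fun v => if v ∈ A then f v else a + g v, ?_, ?_⟩
  · intro v hv
    by_cases hvA : v ∈ A
    · simp only [if_pos hvA]
      exact lt_of_lt_of_le (hfb v hvA) (Nat.le_add_right _ _)
    · rcases hv with hv | hv
      · exact absurd hv hvA
      · simp only [if_neg hvA]
        exact Nat.add_lt_add_left (hgb v hv) a
  · intro i
    by_cases hia : i < a
    · refine acyclic_mono (B := {v | v ∈ A ∧ f v = i}) ?_ (hfc i)
      rintro v ⟨hv, hfv⟩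
      by_cases hvA : v ∈ A
      · exact ⟨hvA, by simpa [if_pos hvA] using hfv⟩
      · exfalso
        simp only [if_neg hvA] at hfv
        omega
    · refine acyclic_mono (B := {v | v ∈ B ∧ g v = i - a}) ?_ (hgc (i - a))
      rintro v ⟨hv, hfv⟩
      by_cases hvA : v ∈ A
      · exfalso
        simp only [if_pos hvA] at hfv
        exact hia (hfv ▸ hfb v hvA)
      · rcases hv with hv | hv
        · exact absurd hv hvA
        · simp only [if_neg hvA] at hfv
          exact ⟨hv, by omega⟩

lemma colOn_biUnion {ι : Type*} [DecidableEq ι] (s : Finset ι) (P : ι → Set V) (c : ℕ)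
    (hdis : ∀ i ∈ s, ∀ j ∈ s, i ≠ j → Disjoint (P i) (P j))
    (hcol : ∀ j ∈ s, ColOn Adj (P j) c) :
    ColOn Adj (⋃ j ∈ s, P j) (s.card * c) := by
  classical
  induction s using Finset.induction_on with
  | empty => simpa using colOn_empty (Adj := Adj) 0
  | insert a s hnotmem ih =>
    have hd : Disjoint (P a) (⋃ j ∈ s, P j) := by
      rw [Set.disjoint_iUnion₂_right]
      intro j hj
      exact hdis a (Finset.mem_insert_self a s) j (Finset.mem_insert_of_mem hj)
        (fun hne => hnotmem (hne ▸ hj))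
    have hu : (⋃ j ∈ insert a s, P j) = P a ∪ ⋃ j ∈ s, P j := by
      simp [Finset.mem_insert, Set.iUnion_or, Set.iUnion_union_distrib]
    rw [hu, Finset.card_insert_of_notMem hnotmem, Nat.succ_mul, Nat.add_comm]
    exact colOn_union hd (hcol a (Finset.mem_insert_self a s))
      (ih (fun i hi j hj hij => hdis i (Finset.mem_insert_of_mem hi) j
        (Finset.mem_insert_of_mem hj) hij)
        (fun j hj => hcol j (Finset.mem_insert_of_mem hj)))

lemma diColorable_iff_colOn_univ {k : ℕ} :
    DiColorable Adj k ↔ ColOn Adj (Set.univ : Set V) k := by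
  constructor
  · rintro ⟨f, hf⟩
    refine ⟨fun v => (f v).val, fun v _ => (f v).isLt, fun i => ?_⟩
    by_cases hik : i < k
    · refine acyclic_mono (B := {v | f v = (⟨i, hik⟩ : Fin k)}) ?_ (hf ⟨i, hik⟩)
      rintro v ⟨-, hv⟩
      exact Fin.ext hv
    · refine acyclic_mono (B := (∅ : Set V)) ?_ acyclic_empty
      rintro v ⟨-, hv⟩
      exact absurd (hv ▸ (f v).isLt) hik
  · rintro ⟨f, hb, hc⟩
    refine ⟨fun v => ⟨f v, hb v (Set.mem_univ v)⟩, fun i => ?_⟩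
    refine acyclic_mono (B := {v | v ∈ (Set.univ : Set V) ∧ f v = i.val}) ?_ (hc i.val)
    rintro v hv
    exact ⟨Set.mem_univ v, by simpa [Fin.ext_iff] using hv⟩

lemma dichromNum_le_of_colOn {m : ℕ} (h : ColOn Adj (Set.univ : Set V) m) :
    dichromNum Adj ≤ m :=
  Nat.sInf_le (diColorable_iff_colOn_univ.mpr h)

lemma not_adj_self (hDF : DigonFree Adj) (v : V) : ¬ Adj v v := fun h => hDF v v h h

lemma diColorable_card (hDF : DigonFree Adj) : DiColorable Adj (Fintype.card V) := by
  refine ⟨Fintype.equivFin V, fun i v hv hT => ?_⟩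
  obtain ⟨u, hu, -⟩ := Relation.TransGen.head'_iff.mp hT
  have : v = u := (Fintype.equivFin V).injective (hu.1.trans hu.2.1.symm)
  exact not_adj_self hDF v (this ▸ hu.2.2)

lemma colOn_univ_of_dichromNum_le (hDF : DigonFree Adj) {m : ℕ}
    (h : dichromNum Adj ≤ m) : ColOn Adj (Set.univ : Set V) m := by
  have hne : {k | DiColorable Adj k}.Nonempty := ⟨Fintype.card V, diColorable_card hDF⟩
  have hmem : DiColorable Adj (dichromNum Adj) := Nat.sInf_mem hne
  exact colOn_mono_k h (diColorable_iff_colOn_univ.mp hmem)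

end Col
section Core
variable {V : Type*} [Fintype V] {Adj : V → V → Prop}

open scoped Classical in
lemma ncard_filter_eq (P : V → Prop) :
    {u | P u}.ncard = (Finset.univ.filter fun u => P u).card := by
  classical
  rw [← Set.ncard_coe_finset]
  congr 1
  ext u
  simp

lemma filter_card_eq_natCard (P : V → Prop) [DecidablePred P] :
    (Finset.univ.filter fun u => P u).card = Nat.card {u // P u} := by
  rw [Nat.card_eq_fintype_card]
  exact (Fintype.card_subtype _).symm

lemma colOn_extend (hDF : DigonFree Adj) {S' : Set V} {v : V} (hv : v ∉ S') {m : ℕ}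
    (hdeg : odeg Adj S' v < m ∨ ideg Adj S' v < m)
    (h : ColOn Adj S' m) : ColOn Adj (insert v S') m := by
  classical
  obtain ⟨f, hb, hc⟩ := h
  rcases hdeg with hdeg | hdeg
  · -- avoid colors of out-neighbours
    set nb : Finset V := Finset.univ.filter (fun u => u ∈ S' ∧ Adj v u) with hnb
    have hcard : nb.card < m := by
      have : nb.card = odeg Adj S' v := by rw [hnb]; exact filter_card_eq_natCard _
      omega
    have hex : ∃ i, i < m ∧ i ∉ nb.image f := by
      by_contra hcon
      push_neg at hcon
      have hsub : Finset.range m ⊆ nb.image f := by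
        intro i hi
        exact hcon i (Finset.mem_range.mp hi)
      have h1 := Finset.card_le_card hsub
      rw [Finset.card_range] at h1
      have h2 := Finset.card_image_le (s := nb) (f := f)
      omega
    obtain ⟨i, him, hi⟩ := hex
    refine ⟨Function.update f v i, ?_, ?_⟩
    · intro u hu
      by_cases huv : u = v
      · subst huv; rw [Function.update_self]; exact him
      · rw [Function.update_of_ne huv]
        exact hb u ((Set.mem_insert_iff.mp hu).resolve_left huv)
    · intro j
      by_cases hji : j = i
      · subst hji
        have hset : {u | u ∈ insert v S' ∧ Function.update f v j u = j} =
            insert v {u | u ∈ S' ∧ f u = j} := by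
          ext u
          by_cases huv : u = v
          · subst huv; simp [Function.update_self, hv]
          · simp [Function.update_of_ne huv, Set.mem_insert_iff, huv]
        rw [hset]
        refine acyclic_insert_no_out (hc j) (not_adj_self hDF v) ?_
        rintro u ⟨huS, hfu⟩ hadj
        exact hi (Finset.mem_image.mpr ⟨u, Finset.mem_filter.mpr
          ⟨Finset.mem_univ u, huS, hadj⟩, hfu⟩)
      · have hset : {u | u ∈ insert v S' ∧ Function.update f v i u = j} =
            {u | u ∈ S' ∧ f u = j} := by
          ext u
          by_cases huv : u = v
          · subst huv
            constructor
            · rintro ⟨-, hh⟩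
              rw [Function.update_self] at hh
              exact absurd hh.symm hji
            · rintro ⟨hh, -⟩
              exact absurd hh hv
          · simp [Function.update_of_ne huv, Set.mem_insert_iff, huv]
        rw [hset]
        exact hc j
  · -- avoid colors of in-neighbours
    set nb : Finset V := Finset.univ.filter (fun u => u ∈ S' ∧ Adj u v) with hnb
    have hcard : nb.card < m := by
      have : nb.card = ideg Adj S' v := by rw [hnb]; exact filter_card_eq_natCard _
      omega
    have hex : ∃ i, i < m ∧ i ∉ nb.image f := by
      by_contra hcon
      push_neg at hcon
      have hsub : Finset.range m ⊆ nb.image f := by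
        intro i hi
        exact hcon i (Finset.mem_range.mp hi)
      have h1 := Finset.card_le_card hsub
      rw [Finset.card_range] at h1
      have h2 := Finset.card_image_le (s := nb) (f := f)
      omega
    obtain ⟨i, him, hi⟩ := hex
    refine ⟨Function.update f v i, ?_, ?_⟩
    · intro u hu
      by_cases huv : u = v
      · subst huv; rw [Function.update_self]; exact him
      · rw [Function.update_of_ne huv]
        exact hb u ((Set.mem_insert_iff.mp hu).resolve_left huv)
    · intro j
      by_cases hji : j = i
      · subst hji
        have hset : {u | u ∈ insert v S' ∧ Function.update f v j u = j} =
            insert v {u | u ∈ S' ∧ f u = j} := by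
          ext u
          by_cases huv : u = v
          · subst huv; simp [Function.update_self, hv]
          · simp [Function.update_of_ne huv, Set.mem_insert_iff, huv]
        rw [hset]
        refine acyclic_insert_no_in (hc j) (not_adj_self hDF v) ?_
        rintro u ⟨huS, hfu⟩ hadj
        exact hi (Finset.mem_image.mpr ⟨u, Finset.mem_filter.mpr
          ⟨Finset.mem_univ u, huS, hadj⟩, hfu⟩)
      · have hset : {u | u ∈ insert v S' ∧ Function.update f v i u = j} =
            {u | u ∈ S' ∧ f u = j} := by
          ext u
          by_cases huv : u = v
          · subst huv
            constructor
            · rintro ⟨-, hh⟩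
              rw [Function.update_self] at hh
              exact absurd hh.symm hji
            · rintro ⟨hh, -⟩
              exact absurd hh hv
          · simp [Function.update_of_ne huv, Set.mem_insert_iff, huv]
        rw [hset]
        exact hc j

/-- the degeneracy/core lemma -/
lemma core_exists (hDF : DigonFree Adj) (β : ℕ) :
    ∀ (n : ℕ) (S : Set V), S.ncard ≤ n →
    ∃ T : Set V, T ⊆ S ∧ (∀ v ∈ T, β ≤ odeg Adj T v ∧ β ≤ ideg Adj T v) ∧
      ∀ c, ColOn Adj T c → ColOn Adj S (max β c) := by
  intro n
  induction n with
  | zero =>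
    intro S hS
    have hSe : S = ∅ := (Set.ncard_eq_zero (Set.toFinite S)).mp (Nat.le_zero.mp hS)
    exact ⟨∅, by simp [hSe], by simp, fun c _ => by rw [hSe]; exact colOn_empty _⟩
  | succ n ih =>
    intro S hS
    by_cases hall : ∀ v ∈ S, β ≤ odeg Adj S v ∧ β ≤ ideg Adj S v
    · exact ⟨S, subset_rfl, hall, fun c hc => colOn_mono_k (le_max_right β c) hc⟩
    · push_neg at hall
      obtain ⟨v, hvS, hbad⟩ := hall
      have hdeg : odeg Adj S v < β ∨ ideg Adj S v < β := by
        rcases lt_or_ge (odeg Adj S v) β with hh | hh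
        · exact Or.inl hh
        · exact Or.inr (hbad hh)
      have hlt := Set.ncard_diff_singleton_lt_of_mem hvS (Set.toFinite S)
      have hcard : (S \ {v}).ncard ≤ n := by omega
      obtain ⟨T, hTS', hTdeg, hTcol⟩ := ih (S \ {v}) hcard
      refine ⟨T, hTS'.trans Set.diff_subset, hTdeg, fun c hc => ?_⟩
      have h1 : ColOn Adj (S \ {v}) (max β c) := hTcol c hc
      have hvS' : v ∉ S \ {v} := fun hcon => hcon.2 rfl
      have hdeg' : odeg Adj (S \ {v}) v < max β c ∨ ideg Adj (S \ {v}) v < max β c := by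
        rcases hdeg with hh | hh
        · exact Or.inl (lt_of_le_of_lt (odeg_mono Set.diff_subset v)
            (lt_of_lt_of_le hh (le_max_left β c)))
        · exact Or.inr (lt_of_le_of_lt (ideg_mono Set.diff_subset v)
            (lt_of_lt_of_le hh (le_max_left β c)))
      have h2 : insert v (S \ {v}) = S := by
        rw [Set.insert_diff_singleton, Set.insert_eq_of_mem hvS]
      rw [← h2]
      exact colOn_extend hDF hvS' hdeg' h1

end Core
section Peel
variable {V : Type*} [Fintype V] {Adj : V → V → Prop}

lemma exists_max_acyclic (S : Set V) :
    ∃ A : Set V, A ⊆ S ∧ AcyclicSet Adj A ∧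
      ∀ v ∈ S \ A, ¬ AcyclicSet Adj (insert v A) := by
  classical
  set F : Finset (Finset V) :=
    Finset.univ.filter (fun B : Finset V => ↑B ⊆ S ∧ AcyclicSet Adj ↑B) with hF
  have hne : F.Nonempty := by
    refine ⟨∅, Finset.mem_filter.mpr ⟨Finset.mem_univ _, ?_, ?_⟩⟩
    · simp
    · simpa using (acyclic_empty (Adj := Adj))
  obtain ⟨B, hBF, hmax⟩ := F.exists_max_image Finset.card hne
  obtain ⟨-, hBS, hBacyc⟩ := Finset.mem_filter.mp hBF
  refine ⟨↑B, hBS, hBacyc, ?_⟩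
  rintro v ⟨hvS, hvB⟩ hacyc
  have hvB' : v ∉ B := fun hcon => hvB (Finset.mem_coe.mpr hcon)
  have hmem : insert v B ∈ F := by
    refine Finset.mem_filter.mpr ⟨Finset.mem_univ _, ?_, ?_⟩
    · rw [Finset.coe_insert]
      exact Set.insert_subset hvS hBS
    · rw [Finset.coe_insert]
      exact hacyc
  have := hmax (insert v B) hmem
  rw [Finset.card_insert_of_notMem hvB'] at this
  omega

lemma prod_step {a b n : ℕ} (ha : 1 ≤ a) (hb : 1 ≤ b) (hab : a * b ≤ (n+1)^2) :
    (a - 1) * (b - 1) ≤ n^2 := by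
  zify [ha, hb]
  have ha' : (1:ℤ) ≤ a := by exact_mod_cast ha
  have hb' : (1:ℤ) ≤ b := by exact_mod_cast hb
  have hab' : (a:ℤ) * b ≤ ((n:ℤ)+1)^2 := by exact_mod_cast hab
  rcases le_or_gt (2*(n:ℤ)+2) ((a:ℤ)+b) with hs | hs
  · nlinarith
  · nlinarith [sq_nonneg ((a:ℤ) - b)]

/-- peeling: from the bound at level Δ₀ we get χ ≤ n - 1 at every level n ≥ Δ₀ -/
lemma peel (hDF : DigonFree Adj) (Δ₀ : ℕ)
    (E : ∀ S : Set V, (∀ v ∈ S, odeg Adj S v * ideg Adj S v ≤ Δ₀^2) →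
      ColOn Adj S (Δ₀ - 1)) (hΔ₀ : 2 ≤ Δ₀) :
    ∀ n, Δ₀ ≤ n → ∀ S : Set V,
      (∀ v ∈ S, odeg Adj S v * ideg Adj S v ≤ n^2) → ColOn Adj S (n - 1) := by
  intro n hn
  induction n, hn using Nat.le_induction with
  | base => exact E
  | succ n hn ih =>
    intro S hS
    obtain ⟨A, hAS, hAacyc, hAmax⟩ := exists_max_acyclic (Adj := Adj) S
    have hstep : ∀ v ∈ S \ A, odeg Adj (S \ A) v * ideg Adj (S \ A) v ≤ n^2 := by
      intro v hv
      obtain ⟨⟨u₁, hu₁, ha₁⟩, ⟨u₂, hu₂, ha₂⟩⟩ :=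
        exists_nbrs_of_not_acyclic_insert hAacyc (not_adj_self hDF v) (hAmax v hv)
      have hod := odeg_drop hAS hu₁ ha₁ (v := v)
      have hid := ideg_drop hAS hu₂ ha₂ (v := v)
      have h1 : 1 ≤ odeg Adj S v := by omega
      have h2 : 1 ≤ ideg Adj S v := by omega
      calc odeg Adj (S \ A) v * ideg Adj (S \ A) v
          ≤ (odeg Adj S v - 1) * (ideg Adj S v - 1) :=
            Nat.mul_le_mul (by omega) (by omega)
        _ ≤ n^2 := prod_step h1 h2 (hS v hv.1)
    have h1 : ColOn Adj (S \ A) (n - 1) := ih (S \ A) hstep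
    have h2 : ColOn Adj A 1 := colOn_of_acyclic hAacyc
    have h3 : ColOn Adj (A ∪ (S \ A)) (1 + (n - 1)) :=
      colOn_union Set.disjoint_sdiff_right h2 h1
    have h4 : A ∪ (S \ A) = S := Set.union_diff_cancel hAS
    have h5 : 1 + (n - 1) = (n + 1) - 1 := by omega
    rw [h4, h5] at h3
    exact h3

end Peel
section Bridge

/-- the disjoint union of the digraph induced on `S` with a gadget digraph
(three blown-up classes in a directed triangle, all degrees `Δ₀`). -/
def sumAdj {V : Type} (Adj : V → V → Prop) (S : Set V) (Δ₀ : ℕ) :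
    (↥S ⊕ (Fin 3 × Fin Δ₀)) → (↥S ⊕ (Fin 3 × Fin Δ₀)) → Prop
  | Sum.inl a, Sum.inl b => Adj a.val b.val
  | Sum.inr p, Sum.inr q => q.1 = p.1 + 1
  | _, _ => False

lemma fin3_ne_add_two (i : Fin 3) : i ≠ i + 1 + 1 := by revert i; decide

lemma fin3_self (j : Fin 3) : j = j + 2 + 1 := by revert j; decide

lemma fin3_rev (i j : Fin 3) : i = j + 1 → j = i + 2 := by revert i j; decide

lemma sumAdj_digonFree {V : Type} {Adj : V → V → Prop} (hDF : DigonFree Adj)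
    (S : Set V) (Δ₀ : ℕ) : DigonFree (sumAdj Adj S Δ₀) := by
  rintro (a | p) (b | q) hxy hyx
  · exact hDF _ _ hxy hyx
  · exact hyx
  · exact hxy
  · have hxy' : q.1 = p.1 + 1 := hxy
    have hyx' : p.1 = q.1 + 1 := hyx
    exact fin3_ne_add_two p.1 (by rw [hxy'] at hyx'; exact hyx')

lemma sumAdj_outDeg_inl {V : Type} [Fintype V] {Adj : V → V → Prop} (S : Set V)
    (Δ₀ : ℕ) (a : ↥S) :
    outDeg (sumAdj Adj S Δ₀) (Sum.inl a) ≤ odeg Adj S a.val := by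
  have hinj : Function.Injective
      (fun x : {u : ↥S ⊕ (Fin 3 × Fin Δ₀) // sumAdj Adj S Δ₀ (Sum.inl a) u} =>
        (show {u : V // u ∈ S ∧ Adj a.val u} from
          match x with
          | ⟨Sum.inl b, hb⟩ => ⟨b.val, b.2, hb⟩
          | ⟨Sum.inr p, hp⟩ => False.elim hp)) := by
    rintro ⟨(b | p), hb⟩ ⟨(c | q), hc⟩ hbc
    · simp only [Subtype.mk.injEq] at hbc ⊢
      exact congrArg Sum.inl (Subtype.ext hbc)
    · exact False.elim hc
    · exact False.elim hb
    · exact False.elim hb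
  exact Nat.card_le_card_of_injective _ hinj

lemma sumAdj_inDeg_inl {V : Type} [Fintype V] {Adj : V → V → Prop} (S : Set V)
    (Δ₀ : ℕ) (a : ↥S) :
    inDeg (sumAdj Adj S Δ₀) (Sum.inl a) ≤ ideg Adj S a.val := by
  have hinj : Function.Injective
      (fun x : {u : ↥S ⊕ (Fin 3 × Fin Δ₀) // sumAdj Adj S Δ₀ u (Sum.inl a)} =>
        (show {u : V // u ∈ S ∧ Adj u a.val} from
          match x with
          | ⟨Sum.inl b, hb⟩ => ⟨b.val, b.2, hb⟩
          | ⟨Sum.inr p, hp⟩ => False.elim hp)) := by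
    rintro ⟨(b | p), hb⟩ ⟨(c | q), hc⟩ hbc
    · simp only [Subtype.mk.injEq] at hbc ⊢
      exact congrArg Sum.inl (Subtype.ext hbc)
    · exact False.elim hc
    · exact False.elim hb
    · exact False.elim hb
  exact Nat.card_le_card_of_injective _ hinj

lemma sumAdj_outDeg_inr {V : Type} [Fintype V] {Adj : V → V → Prop} (S : Set V)
    (Δ₀ : ℕ) (p : Fin 3 × Fin Δ₀) :
    outDeg (sumAdj Adj S Δ₀) (Sum.inr p) = Δ₀ := by
  have hbij : Function.Bijective
      (fun b : Fin Δ₀ =>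
        (⟨Sum.inr (p.1 + 1, b), rfl⟩ :
          {u : ↥S ⊕ (Fin 3 × Fin Δ₀) // sumAdj Adj S Δ₀ (Sum.inr p) u})) := by
    constructor
    · intro b c hbc
      simp only [Subtype.mk.injEq, Sum.inr.injEq, Prod.mk.injEq] at hbc
      exact (Prod.mk.inj (Sum.inr.inj (congrArg Subtype.val hbc))).2
    · rintro ⟨(b | ⟨j, b⟩), hb⟩
      · exact False.elim hb
      · have hj : j = p.1 + 1 := hb
        exact ⟨b, by subst hj; rfl⟩
  rw [outDeg, ← Nat.card_congr (Equiv.ofBijective _ hbij)]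
  simp [Nat.card_eq_fintype_card]

lemma sumAdj_inDeg_inr {V : Type} [Fintype V] {Adj : V → V → Prop} (S : Set V)
    (Δ₀ : ℕ) (p : Fin 3 × Fin Δ₀) :
    inDeg (sumAdj Adj S Δ₀) (Sum.inr p) = Δ₀ := by
  have hbij : Function.Bijective
      (fun b : Fin Δ₀ =>
        (⟨Sum.inr (p.1 + 2, b), fin3_self p.1⟩ :
          {u : ↥S ⊕ (Fin 3 × Fin Δ₀) // sumAdj Adj S Δ₀ u (Sum.inr p)})) := by
    constructor
    · intro b c hbc
      simp only [Subtype.mk.injEq, Sum.inr.injEq, Prod.mk.injEq] at hbc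
      exact (Prod.mk.inj (Sum.inr.inj (congrArg Subtype.val hbc))).2
    · rintro ⟨(b | ⟨j, b⟩), hb⟩
      · exact False.elim hb
      · have hj : p.1 = j + 1 := hb
        have : j = p.1 + 2 := fin3_rev _ _ hj
        exact ⟨b, by subst this; rfl⟩
  rw [inDeg, ← Nat.card_congr (Equiv.ofBijective _ hbij)]
  simp [Nat.card_eq_fintype_card]

/-- the key bridge: the hypothesis `h` of the theorem gives a `(Δ₀-1)`-coloring
of any vertex set all of whose inner degree-products are at most `Δ₀²`. -/
lemma bridge (Δ₀ : ℕ)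
    (h : ∀ (W : Type) [Fintype W] (G : W → W → Prop),
      DigonFree G → ⌈tildeDelta G⌉₊ = Δ₀ → dichromNum G ≤ Δ₀ - 1)
    {V : Type} [Fintype V] {Adj : V → V → Prop} (hDF : DigonFree Adj)
    (S : Set V) (hdeg : ∀ v ∈ S, odeg Adj S v * ideg Adj S v ≤ Δ₀ ^ 2) :
    ColOn Adj S (Δ₀ - 1) := by
  classical
  set B := sumAdj Adj S Δ₀ with hB
  -- bound the δ-tilde of the augmented digraph
  have hsq : ∀ x : ↥S ⊕ (Fin 3 × Fin Δ₀),
      Real.sqrt ((outDeg B x : ℝ) * (inDeg B x : ℝ)) ≤ (Δ₀ : ℝ) := by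
    intro x
    have hx : (outDeg B x : ℝ) * (inDeg B x : ℝ) ≤ ((Δ₀ : ℝ)) ^ 2 := by
      rcases x with a | p
      · have h1 := sumAdj_outDeg_inl (Adj := Adj) S Δ₀ a
        have h2 := sumAdj_inDeg_inl (Adj := Adj) S Δ₀ a
        have h3 : outDeg B (Sum.inl a) * inDeg B (Sum.inl a) ≤ Δ₀ ^ 2 :=
          le_trans (Nat.mul_le_mul h1 h2) (hdeg a.val a.2)
        exact_mod_cast h3
      · have h1 := sumAdj_outDeg_inr (Adj := Adj) S Δ₀ p
        have h2 := sumAdj_inDeg_inr (Adj := Adj) S Δ₀ p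
        rw [hB, h1, h2, pow_two]
      -- done
    calc Real.sqrt ((outDeg B x : ℝ) * (inDeg B x : ℝ))
        ≤ Real.sqrt ((Δ₀ : ℝ) ^ 2) := Real.sqrt_le_sqrt hx
      _ = (Δ₀ : ℝ) := Real.sqrt_sq (by positivity)
  have htd_le : tildeDelta B ≤ (Δ₀ : ℝ) := by
    rcases isEmpty_or_nonempty (↥S ⊕ (Fin 3 × Fin Δ₀)) with hcase | hcase
    · rw [tildeDelta, iSup, Set.range_eq_empty, Real.sSup_empty]
      positivity
    · exact ciSup_le hsq
  have hceil : ⌈tildeDelta B⌉₊ = Δ₀ := by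
    rcases Nat.eq_zero_or_pos Δ₀ with hΔ | hΔ
    · subst hΔ
      exact Nat.ceil_eq_zero.mpr (by exact_mod_cast htd_le)
    · refine le_antisymm (Nat.ceil_le.mpr htd_le) ?_
      have hw : (Δ₀ : ℝ) ≤ tildeDelta B := by
        have hb : BddAbove (Set.range fun x : ↥S ⊕ (Fin 3 × Fin Δ₀) =>
            Real.sqrt ((outDeg B x : ℝ) * (inDeg B x : ℝ))) :=
          (Set.finite_range _).bddAbove
        have hle := le_ciSup hb (Sum.inr ((0 : Fin 3), (⟨0, hΔ⟩ : Fin Δ₀)))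
        have hval : Real.sqrt
            ((outDeg B (Sum.inr ((0 : Fin 3), (⟨0, hΔ⟩ : Fin Δ₀))) : ℝ) *
              (inDeg B (Sum.inr ((0 : Fin 3), (⟨0, hΔ⟩ : Fin Δ₀))) : ℝ)) = (Δ₀ : ℝ) := by
          rw [hB, sumAdj_outDeg_inr (Adj := Adj), sumAdj_inDeg_inr (Adj := Adj)]
          exact Real.sqrt_mul_self (Nat.cast_nonneg _)
        rw [hval] at hle
        exact hle
      calc Δ₀ = ⌈(Δ₀ : ℝ)⌉₊ := (Nat.ceil_natCast Δ₀).symm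
        _ ≤ ⌈tildeDelta B⌉₊ := Nat.ceil_le_ceil hw
  -- apply the hypothesis
  have hDFB : DigonFree B := sumAdj_digonFree hDF S Δ₀
  have hchrom := h _ B hDFB hceil
  obtain ⟨f, hfb, hfc⟩ := colOn_univ_of_dichromNum_le hDFB hchrom
  -- transfer the coloring back to S
  refine ⟨fun v => if hv : v ∈ S then f (Sum.inl ⟨v, hv⟩) else 0, ?_, ?_⟩
  · intro v hv
    dsimp only
    rw [dif_pos hv]
    exact hfb _ (Set.mem_univ _)
  · intro i
    dsimp only
    intro v hvC hT
    set C : Set V := {v | v ∈ S ∧ (if hv : v ∈ S then f (Sum.inl ⟨v, hv⟩) else 0) = i}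
      with hC
    have hCS : ∀ {x}, x ∈ C → x ∈ S := fun hx => hx.1
    have hCf : ∀ {x} (hx : x ∈ C), f (Sum.inl ⟨x, hCS hx⟩) = i := by
      intro x hx
      have := hx.2
      rwa [dif_pos (hCS hx)] at this
    set C' : Set (↥S ⊕ (Fin 3 × Fin Δ₀)) :=
      {x | x ∈ (Set.univ : Set (↥S ⊕ (Fin 3 × Fin Δ₀))) ∧ f x = i} with hC'
    have key : ∀ {x y : V},
        Relation.TransGen (fun x y => x ∈ C ∧ y ∈ C ∧ Adj x y) x y →
        ∀ (hx : x ∈ C) (hy : y ∈ C),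
          Relation.TransGen (fun x y => x ∈ C' ∧ y ∈ C' ∧ B x y)
            (Sum.inl ⟨x, hCS hx⟩) (Sum.inl ⟨y, hCS hy⟩) := by
      intro x y hT
      induction hT with
      | single hxy =>
        intro hx hy
        exact Relation.TransGen.single
          ⟨⟨Set.mem_univ _, hCf hx⟩, ⟨Set.mem_univ _, hCf hy⟩, hxy.2.2⟩
      | tail hxb hby ih =>
        intro hx hy
        have hb' : _ ∈ C := hby.1
        exact (ih hx hb').tail
          ⟨⟨Set.mem_univ _, hCf hb'⟩, ⟨Set.mem_univ _, hCf hy⟩, hby.2.2⟩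
    exact hfc i (Sum.inl ⟨v, hCS hvC⟩) ⟨Set.mem_univ _, hCf hvC⟩ (key hT hvC hvC)

end Bridge
section Partition
open scoped Classical
variable {V : Type*} [Fintype V] (Adj : V → V → Prop)

/-- number of monochromatic arcs inside `S` -/
noncomputable def mcount (S : Set V) {k : ℕ} (g : V → Fin k) : ℕ :=
  (Finset.univ.filter fun p : V × V =>
    p.1 ∈ S ∧ p.2 ∈ S ∧ Adj p.1 p.2 ∧ g p.1 = g p.2).card

noncomputable def dout (S : Set V) {k : ℕ} (g : V → Fin k) (v : V) (c : Fin k) : ℕ :=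
  (Finset.univ.filter fun u => u ∈ S ∧ Adj v u ∧ g u = c).card

noncomputable def din (S : Set V) {k : ℕ} (g : V → Fin k) (v : V) (c : Fin k) : ℕ :=
  (Finset.univ.filter fun u => u ∈ S ∧ Adj u v ∧ g u = c).card

variable {Adj}

lemma dout_sum (S : Set V) {k : ℕ} (g : V → Fin k) (v : V) :
    ∑ c : Fin k, dout Adj S g v c = odeg Adj S v := by
  have h1 : odeg Adj S v =
      (Finset.univ.filter fun u => u ∈ S ∧ Adj v u).card :=
    (filter_card_eq_natCard _).symm
  rw [h1, Finset.card_eq_sum_card_fiberwise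
    (f := g) (t := Finset.univ) (fun x _ => Finset.mem_univ _)]
  refine Finset.sum_congr rfl fun c _ => ?_
  rw [dout, Finset.filter_filter]
  congr 1
  apply Finset.filter_congr
  intro u _
  tauto

lemma din_sum (S : Set V) {k : ℕ} (g : V → Fin k) (v : V) :
    ∑ c : Fin k, din Adj S g v c = ideg Adj S v := by
  have h1 : ideg Adj S v =
      (Finset.univ.filter fun u => u ∈ S ∧ Adj u v).card :=
    (filter_card_eq_natCard _).symm
  rw [h1, Finset.card_eq_sum_card_fiberwise
    (f := g) (t := Finset.univ) (fun x _ => Finset.mem_univ _)]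
  refine Finset.sum_congr rfl fun c _ => ?_
  rw [din, Finset.filter_filter]
  congr 1
  apply Finset.filter_congr
  intro u _
  tauto

lemma odeg_part_eq (S : Set V) {k : ℕ} (g : V → Fin k) (v : V) (c : Fin k) :
    odeg Adj (S ∩ {u | g u = c}) v = dout Adj S g v c := by
  rw [odeg, dout]
  rw [filter_card_eq_natCard]
  apply Nat.card_congr
  apply Equiv.subtypeEquivRight
  intro u
  constructor
  · rintro ⟨⟨h1, h2⟩, h3⟩; exact ⟨h1, h3, h2⟩
  · rintro ⟨h1, h2, h3⟩; exact ⟨⟨h1, h3⟩, h2⟩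

lemma ideg_part_eq (S : Set V) {k : ℕ} (g : V → Fin k) (ve : V) (c : Fin k) :
    ideg Adj (S ∩ {u | g u = c}) ve = din Adj S g ve c := by
  rw [ideg, din]
  rw [filter_card_eq_natCard]
  apply Nat.card_congr
  apply Equiv.subtypeEquivRight
  intro u
  constructor
  · rintro ⟨⟨h1, h2⟩, h3⟩; exact ⟨h1, h3, h2⟩
  · rintro ⟨h1, h2, h3⟩; exact ⟨⟨h1, h3⟩, h2⟩

/-- the count of monochromatic arcs touching `v` -/
lemma inc_eq (S : Set V) {k : ℕ} (g : V → Fin k) {v : V} (hvS : v ∈ S)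
    (hvv : ¬ Adj v v) :
    (Finset.univ.filter fun p : V × V =>
      (p.1 ∈ S ∧ p.2 ∈ S ∧ Adj p.1 p.2 ∧ g p.1 = g p.2) ∧ (p.1 = v ∨ p.2 = v)).card
      = dout Adj S g v (g v) + din Adj S g v (g v) := by
  have hsplit := Finset.card_filter_add_card_filter_not
    (s := Finset.univ.filter fun p : V × V =>
      (p.1 ∈ S ∧ p.2 ∈ S ∧ Adj p.1 p.2 ∧ g p.1 = g p.2) ∧ (p.1 = v ∨ p.2 = v))
    (p := fun p : V × V => p.1 = v)
  rw [Finset.filter_filter, Finset.filter_filter] at hsplit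
  rw [← hsplit]
  congr 1
  · -- out part
    have heq : (Finset.univ.filter fun p : V × V =>
        ((p.1 ∈ S ∧ p.2 ∈ S ∧ Adj p.1 p.2 ∧ g p.1 = g p.2) ∧ (p.1 = v ∨ p.2 = v))
          ∧ p.1 = v) =
        (Finset.univ.filter fun p : V × V =>
          (p.2 ∈ S ∧ Adj v p.2 ∧ g p.2 = g v) ∧ p.1 = v) := by
      apply Finset.filter_congr
      rintro ⟨x, y⟩ -
      constructor
      · rintro ⟨⟨⟨-, h2, h3, h4⟩, -⟩, h6⟩
        refine ⟨⟨h2, ?_, ?_⟩, h6⟩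
        · rw [← h6]; exact h3
        · rw [← h6]; exact h4.symm
      · rintro ⟨⟨h1, h2, h3⟩, h4⟩
        refine ⟨⟨⟨?_, h1, ?_, ?_⟩, Or.inl h4⟩, h4⟩
        · rw [h4]; exact hvS
        · rw [h4]; exact h2
        · rw [h4]; exact h3.symm
    rw [heq, dout]
    refine Finset.card_bij' (fun p _ => p.2) (fun u _ => (v, u)) ?_ ?_ ?_ ?_
    · rintro ⟨x, y⟩ hp
      obtain ⟨-, ⟨h1, h2, h3⟩, -⟩ := Finset.mem_filter.mp hp
      exact Finset.mem_filter.mpr ⟨Finset.mem_univ _, h1, h2, h3⟩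
    · intro u hu
      obtain ⟨-, h1, h2, h3⟩ := Finset.mem_filter.mp hu
      exact Finset.mem_filter.mpr ⟨Finset.mem_univ _, ⟨h1, h2, h3⟩, rfl⟩
    · rintro ⟨x, y⟩ hp
      obtain ⟨-, -, h⟩ := Finset.mem_filter.mp hp
      simp [← h]
    · intro u hu
      rfl
  · -- in part
    have heq : (Finset.univ.filter fun p : V × V =>
        ((p.1 ∈ S ∧ p.2 ∈ S ∧ Adj p.1 p.2 ∧ g p.1 = g p.2) ∧ (p.1 = v ∨ p.2 = v))
          ∧ ¬ p.1 = v) =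
        (Finset.univ.filter fun p : V × V =>
          (p.1 ∈ S ∧ Adj p.1 v ∧ g p.1 = g v) ∧ p.2 = v) := by
      apply Finset.filter_congr
      rintro ⟨x, y⟩ -
      constructor
      · rintro ⟨⟨⟨h1, h2, h3, h4⟩, h5⟩, h6⟩
        rcases h5 with h5 | h5
        · exact absurd h5 h6
        · refine ⟨⟨h1, ?_, ?_⟩, h5⟩
          · rw [← h5]; exact h3
          · rw [← h5]; exact h4
      · rintro ⟨⟨h1, h2, h3⟩, h4⟩
        have hx : ¬ x = v := fun hc => hvv (by rw [hc] at h2; exact h2)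
        refine ⟨⟨⟨h1, ?_, ?_, ?_⟩, Or.inr h4⟩, hx⟩
        · rw [h4]; exact hvS
        · rw [h4]; exact h2
        · rw [h4]; exact h3
    rw [heq, din]
    refine Finset.card_bij' (fun p _ => p.1) (fun u _ => (u, v)) ?_ ?_ ?_ ?_
    · rintro ⟨x, y⟩ hp
      obtain ⟨-, ⟨h1, h2, h3⟩, -⟩ := Finset.mem_filter.mp hp
      exact Finset.mem_filter.mpr ⟨Finset.mem_univ _, h1, h2, h3⟩
    · intro u hu
      obtain ⟨-, h1, h2, h3⟩ := Finset.mem_filter.mp hu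
      exact Finset.mem_filter.mpr ⟨Finset.mem_univ _, ⟨h1, h2, h3⟩, rfl⟩
    · rintro ⟨x, y⟩ hp
      obtain ⟨-, -, h⟩ := Finset.mem_filter.mp hp
      simp [← h]
    · intro u hu
      rfl

lemma dout_update {S : Set V} {k : ℕ} {g : V → Fin k} {v : V} (hvv : ¬ Adj v v)
    (j c : Fin k) : dout Adj S (Function.update g v j) v c = dout Adj S g v c := by
  rw [dout, dout]
  congr 1
  apply Finset.filter_congr
  intro u _
  by_cases huv : u = v
  · subst huv
    constructor
    · rintro ⟨-, h2, -⟩; exact absurd h2 hvv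
    · rintro ⟨-, h2, -⟩; exact absurd h2 hvv
  · rw [Function.update_of_ne huv]

lemma din_update {S : Set V} {k : ℕ} {g : V → Fin k} {v : V} (hvv : ¬ Adj v v)
    (j c : Fin k) : din Adj S (Function.update g v j) v c = din Adj S g v c := by
  rw [din, din]
  congr 1
  apply Finset.filter_congr
  intro u _
  by_cases huv : u = v
  · subst huv
    constructor
    · rintro ⟨-, h2, -⟩; exact absurd h2 hvv
    · rintro ⟨-, h2, -⟩; exact absurd h2 hvv
  · rw [Function.update_of_ne huv]

lemma mcount_move (S : Set V) {k : ℕ} (g : V → Fin k) {v : V} (hvS : v ∈ S)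
    (hvv : ¬ Adj v v) (j : Fin k) :
    mcount Adj S (Function.update g v j) + (dout Adj S g v (g v) + din Adj S g v (g v))
      = mcount Adj S g + (dout Adj S g v j + din Adj S g v j) := by
  -- split both counts into touching / not-touching parts
  have hsplitg := Finset.card_filter_add_card_filter_not
    (s := Finset.univ.filter fun p : V × V =>
      p.1 ∈ S ∧ p.2 ∈ S ∧ Adj p.1 p.2 ∧ g p.1 = g p.2)
    (p := fun p : V × V => p.1 = v ∨ p.2 = v)
  have hsplitg' := Finset.card_filter_add_card_filter_not
    (s := Finset.univ.filter fun p : V × V =>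
      p.1 ∈ S ∧ p.2 ∈ S ∧ Adj p.1 p.2 ∧
        Function.update g v j p.1 = Function.update g v j p.2)
    (p := fun p : V × V => p.1 = v ∨ p.2 = v)
  rw [Finset.filter_filter, Finset.filter_filter] at hsplitg hsplitg'
  -- the untouched parts agree
  have hoff : (Finset.univ.filter fun p : V × V =>
      (p.1 ∈ S ∧ p.2 ∈ S ∧ Adj p.1 p.2 ∧
        Function.update g v j p.1 = Function.update g v j p.2) ∧
      ¬ (p.1 = v ∨ p.2 = v)).card =
      (Finset.univ.filter fun p : V × V =>
      (p.1 ∈ S ∧ p.2 ∈ S ∧ Adj p.1 p.2 ∧ g p.1 = g p.2) ∧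
      ¬ (p.1 = v ∨ p.2 = v)).card := by
    congr 1
    apply Finset.filter_congr
    rintro ⟨x, y⟩ -
    constructor
    · rintro ⟨⟨h1, h2, h3, h4⟩, h5⟩
      push_neg at h5
      rw [Function.update_of_ne h5.1, Function.update_of_ne h5.2] at h4
      exact ⟨⟨h1, h2, h3, h4⟩, by push_neg; exact h5⟩
    · rintro ⟨⟨h1, h2, h3, h4⟩, h5⟩
      push_neg at h5
      refine ⟨⟨h1, h2, h3, ?_⟩, by push_neg; exact h5⟩
      rw [Function.update_of_ne h5.1, Function.update_of_ne h5.2]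
      exact h4
  -- the touched part of g
  have hincg := inc_eq S g hvS hvv
  -- the touched part of the updated function
  have hincg' := inc_eq S (Function.update g v j) hvS hvv
  rw [dout_update hvv, din_update hvv, Function.update_self] at hincg'
  -- put everything together
  rw [mcount, mcount, ← hsplitg, ← hsplitg', hoff, hincg, hincg']
  ring

/-- the deterministic partition lemma -/
lemma partition_lemma (hDF : DigonFree Adj) (S : Set V) (k t : ℕ) (hk : 0 < k)
    (hdeg : ∀ v ∈ S, odeg Adj S v + ideg Adj S v + 1 ≤ k * (t + 1)) :
    ∃ g : V → Fin k, ∀ v ∈ S,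
      odeg Adj (S ∩ {u | g u = g v}) v + ideg Adj (S ∩ {u | g u = g v}) v ≤ t := by
  haveI : Nonempty (Fin k) := ⟨⟨0, hk⟩⟩
  obtain ⟨g, -, hgmin⟩ := Finset.exists_min_image
    (Finset.univ : Finset (V → Fin k)) (fun g => mcount Adj S g)
    ⟨fun _ => ⟨0, hk⟩, Finset.mem_univ _⟩
  refine ⟨g, fun v hvS => ?_⟩
  rw [odeg_part_eq, ideg_part_eq]
  by_contra hcon
  push_neg at hcon
  have hvv : ¬ Adj v v := not_adj_self hDF v
  -- some colour has a strictly smaller incident count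
  have hex : ∃ c : Fin k, dout Adj S g v c + din Adj S g v c
      < dout Adj S g v (g v) + din Adj S g v (g v) := by
    by_contra hall
    push_neg at hall
    have hsum : k * (t + 1) ≤ ∑ c : Fin k, (dout Adj S g v c + din Adj S g v c) := by
      calc k * (t + 1) = (Finset.univ : Finset (Fin k)).card • (t + 1) := by
            simp [Finset.card_univ, Nat.smul_one_eq_cast]
        _ ≤ ∑ c : Fin k, (dout Adj S g v c + din Adj S g v c) := by
            apply Finset.card_nsmul_le_sum
            intro c _
            have := hall c
            omega
    rw [Finset.sum_add_distrib, dout_sum, din_sum] at hsum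
    have := hdeg v hvS
    omega
  obtain ⟨c, hc⟩ := hex
  have hmove := mcount_move S g hvS hvv c
  have hmin := hgmin (Function.update g v c) (Finset.mem_univ _)
  omega

end Partition
section Assembly

lemma odeg_le_outDeg {V : Type*} [Fintype V] {Adj : V → V → Prop} (S : Set V) (v : V) :
    odeg Adj S v ≤ outDeg Adj v := by
  have : Function.Injective
      (fun x : {u : V // u ∈ S ∧ Adj v u} => (⟨x.1, x.2.2⟩ : {u : V // Adj v u})) := by
    intro a b hab
    have h1 := congrArg Subtype.val hab
    exact Subtype.ext h1
  exact Nat.card_le_card_of_injective _ this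

lemma ideg_le_inDeg {V : Type*} [Fintype V] {Adj : V → V → Prop} (S : Set V) (v : V) :
    ideg Adj S v ≤ inDeg Adj v := by
  have : Function.Injective
      (fun x : {u : V // u ∈ S ∧ Adj u v} => (⟨x.1, x.2.2⟩ : {u : V // Adj u v})) := by
    intro a b hab
    have h1 := congrArg Subtype.val hab
    exact Subtype.ext h1
  exact Nat.card_le_card_of_injective _ this

lemma amgm_nat {a b n : ℕ} (h : a + b ≤ 2 * n) : a * b ≤ n ^ 2 := by
  nlinarith [two_mul_le_add_sq a b]

lemma nat_sq_le_imp {a Δ : ℕ} (h : a * a ≤ Δ * Δ) : a ≤ Δ := by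
  by_contra hc
  push_neg at hc
  nlinarith

lemma tot_bound {a b β Δ : ℕ} (hβa : β ≤ a) (hβb : β ≤ b) (hab : a * b ≤ Δ * Δ)
    (hβ : 1 ≤ β) : a + b ≤ Δ + Δ * Δ / β := by
  rcases le_total a b with hord | hord
  · have ha : a ≤ Δ := nat_sq_le_imp (le_trans (Nat.mul_le_mul_left a hord) hab)
    have hb : b ≤ Δ * Δ / β := by
      rw [Nat.le_div_iff_mul_le hβ]
      calc b * β ≤ b * a := Nat.mul_le_mul_left b hβa
        _ = a * b := Nat.mul_comm b a
        _ ≤ Δ * Δ := hab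
    omega
  · have hb : b ≤ Δ := nat_sq_le_imp (le_trans (Nat.mul_le_mul_right b hord) hab)
    have ha : a ≤ Δ * Δ / β := by
      rw [Nat.le_div_iff_mul_le hβ]
      calc a * β ≤ a * b := Nat.mul_le_mul_left a hβb
        _ ≤ Δ * Δ := hab
    omega

lemma beta_bound {Δ K q β : ℕ} (hK : 0 < K) (hq : q = Δ / K + 1) (hβ : β = Δ - q) :
    (β : ℝ) ≤ (1 - 1 / (K : ℝ)) * Δ := by
  have hKR : (0:ℝ) < K := by exact_mod_cast hK
  have hdm := Nat.div_add_mod Δ K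
  have hmod := Nat.mod_lt Δ hK
  have hcast : (Δ : ℝ) < K * ((Δ / K : ℕ) + 1) := by
    have : Δ < K * (Δ / K) + K := by omega
    have h2 : (Δ:ℝ) < (K * (Δ / K) + K : ℕ) := by exact_mod_cast this
    push_cast at h2 ⊢
    linarith
  have hdivq : (Δ : ℝ) / K < ((Δ / K : ℕ) : ℝ) + 1 := by
    rw [div_lt_iff₀ hKR]
    linarith
  rcases le_or_gt q Δ with hqΔ | hqΔ
  · have hcast2 : (β : ℝ) = (Δ : ℝ) - q := by
      rw [hβ]
      push_cast [hqΔ]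
      ring
    have hq2 : ((Δ : ℝ)) / K ≤ (q : ℝ) := by
      rw [hq]
      push_cast
      linarith
    rw [hcast2]
    have : (1 - 1 / (K : ℝ)) * Δ = (Δ : ℝ) - Δ / K := by
      field_simp
    rw [this]
    linarith
  · have : β = 0 := by omega
    rw [this]
    have h1 : 1 / (K : ℝ) ≤ 1 := by
      rw [div_le_one hKR]
      exact_mod_cast hK
    have h2 : (0:ℝ) ≤ Δ := Nat.cast_nonneg _
    push_cast
    nlinarith

lemma numeric_main {x D KR m k b : ℝ} (hx : 2 ≤ x) (hKR : KR = (x + 2) * (2 * x + 1))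
    (hD : KR + 1 ≤ D) (hb : D * (1 - 2 / KR) ≤ b) (hm : m ≤ D + D * D / b)
    (hk : k ≤ m / (2 * x + 1) + 1) :
    k * (x - 1) ≤ (1 - 1 / KR) * D := by
  have hKR20 : (20:ℝ) ≤ KR := by nlinarith
  have hKRpos : (0:ℝ) < KR := by linarith
  have hDpos : (0:ℝ) < D := by linarith
  have hfac : (0:ℝ) < 1 - 2 / KR := by
    rw [sub_pos, div_lt_one hKRpos]
    linarith
  have hbpos : (0:ℝ) < b := lt_of_lt_of_le (by positivity) hb
  -- D*D/b ≤ D/(1-2/KR)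
  have h1 : D * D / b ≤ D / (1 - 2 / KR) := by
    rw [div_le_div_iff₀ hbpos hfac]
    calc D * D * (1 - 2 / KR) = D * (D * (1 - 2 / KR)) := by ring
      _ ≤ D * b := by nlinarith
  -- D/(1-2/KR) ≤ D*(1+4/KR)
  have h2 : D / (1 - 2 / KR) ≤ D * (1 + 4 / KR) := by
    rw [div_le_iff₀ hfac]
    have : (1 + 4 / KR) * (1 - 2 / KR) = 1 + 2 / KR - 8 / KR ^ 2 := by
      field_simp
      ring
    rw [mul_assoc, this]
    have h8 : 8 / KR ^ 2 ≤ 2 / KR := by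
      rw [div_le_div_iff₀ (by positivity) hKRpos]
      nlinarith
    nlinarith
  have hm2 : m ≤ D * (2 + 4 / KR) := by
    calc m ≤ D + D * D / b := hm
      _ ≤ D + D / (1 - 2 / KR) := by linarith
      _ ≤ D + D * (1 + 4 / KR) := by linarith
      _ = D * (2 + 4 / KR) := by ring
  have hx1 : (0:ℝ) < 2 * x + 1 := by linarith
  have hk2 : k ≤ D * (2 + 4 / KR) / (2 * x + 1) + 1 := by
    refine le_trans hk ?_
    gcongr
  have hxm1 : (0:ℝ) ≤ x - 1 := by linarith
  have hgoal : (D * (2 + 4 / KR) / (2 * x + 1) + 1) * (x - 1) ≤ (1 - 1 / KR) * D := by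
    have hexpand : (D * (2 + 4 / KR) / (2 * x + 1) + 1) * (x - 1) =
        (D * (2 + 4 / KR) * (x - 1) + (2 * x + 1) * (x - 1)) / (2 * x + 1) := by
      field_simp
    rw [hexpand, div_le_iff₀ hx1]
    refine le_of_mul_le_mul_right ?_ hKRpos
    have hKRne : KR ≠ 0 := ne_of_gt hKRpos
    have hC : (2 + 4 / KR) * KR = 2 * KR + 4 := by
      rw [add_mul, div_mul_cancel₀ _ hKRne]
    have hCC : (1 - 1 / KR) * KR = KR - 1 := by
      rw [sub_mul, one_mul, one_div, inv_mul_cancel₀ hKRne]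
    have hA : (D * (2 + 4 / KR) * (x - 1) + (2 * x + 1) * (x - 1)) * KR =
        D * (2 * KR + 4) * (x - 1) + (2 * x + 1) * (x - 1) * KR := by
      calc (D * (2 + 4 / KR) * (x - 1) + (2 * x + 1) * (x - 1)) * KR
          = D * ((2 + 4 / KR) * KR) * (x - 1) + (2 * x + 1) * (x - 1) * KR := by ring
        _ = D * (2 * KR + 4) * (x - 1) + (2 * x + 1) * (x - 1) * KR := by rw [hC]
    have hB : (1 - 1 / KR) * D * (2 * x + 1) * KR = D * (KR - 1) * (2 * x + 1) := by
      calc (1 - 1 / KR) * D * (2 * x + 1) * KR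
          = ((1 - 1 / KR) * KR) * (D * (2 * x + 1)) := by ring
        _ = (KR - 1) * (D * (2 * x + 1)) := by rw [hCC]
        _ = D * (KR - 1) * (2 * x + 1) := by ring
    rw [hA, hB]
    have hx0 : (0:ℝ) ≤ x := by linarith
    have hslack : (0:ℝ) ≤ (D - ((x+2)*(2*x+1) + 1)) * (2*x^2 + 3*x + 3) := by
      apply mul_nonneg
      · rw [← hKR]; linarith
      · nlinarith
    subst hKR
    nlinarith [hslack, mul_nonneg (mul_nonneg hx0 hx0) hx0, sq_nonneg (x*x),
      mul_nonneg hx0 (sq_nonneg x), sq_nonneg x]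
  calc k * (x - 1) ≤ (D * (2 + 4 / KR) / (2 * x + 1) + 1) * (x - 1) := by
        exact mul_le_mul_of_nonneg_right hk2 hxm1
    _ ≤ (1 - 1 / KR) * D := hgoal

end Assembly

section MainProof

lemma main_bound (Δ₀ : ℕ)
    (h : ∀ (W : Type) [Fintype W] (G : W → W → Prop),
      DigonFree G → ⌈tildeDelta G⌉₊ = Δ₀ → dichromNum G ≤ Δ₀ - 1)
    {V : Type} [Fintype V] (Adj : V → V → Prop) (hDF : DigonFree Adj)
    (hge : Δ₀ ≤ ⌈tildeDelta Adj⌉₊) :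
    (dichromNum Adj : ℝ) ≤
      (1 - 1 / (((Δ₀ + 2) * (2 * Δ₀ + 1) : ℕ) : ℝ)) * (⌈tildeDelta Adj⌉₊ : ℝ) := by
  classical
  set Δ : ℕ := ⌈tildeDelta Adj⌉₊ with hΔdef
  set K : ℕ := (Δ₀ + 2) * (2 * Δ₀ + 1) with hKdef
  have hKpos : 0 < K := by positivity
  have hKRpos : (0:ℝ) < (K:ℝ) := by exact_mod_cast hKpos
  -- all degree products are at most Δ²
  have hprod : ∀ v, outDeg Adj v * inDeg Adj v ≤ Δ * Δ := by
    intro v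
    have hb : BddAbove (Set.range fun v : V =>
        Real.sqrt ((outDeg Adj v : ℝ) * (inDeg Adj v : ℝ))) :=
      (Set.finite_range _).bddAbove
    have h1 : Real.sqrt ((outDeg Adj v : ℝ) * (inDeg Adj v : ℝ)) ≤ tildeDelta Adj :=
      le_ciSup hb v
    have h2 : tildeDelta Adj ≤ (Δ : ℝ) := by rw [hΔdef]; exact Nat.le_ceil _
    have h0 : (0:ℝ) ≤ (outDeg Adj v : ℝ) * (inDeg Adj v : ℝ) := by positivity
    have h3 : ((outDeg Adj v : ℝ) * (inDeg Adj v : ℝ)) ≤ (Δ:ℝ) * Δ := by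
      have h4 := Real.sq_sqrt h0
      nlinarith [Real.sqrt_nonneg ((outDeg Adj v : ℝ) * (inDeg Adj v : ℝ))]
    exact_mod_cast h3
  have hprodS : ∀ (S : Set V), ∀ v ∈ S, odeg Adj S v * ideg Adj S v ≤ Δ * Δ :=
    fun S v _ => le_trans
      (Nat.mul_le_mul (odeg_le_outDeg S v) (ideg_le_inDeg S v)) (hprod v)
  have E' : ∀ S : Set V, (∀ v ∈ S, odeg Adj S v * ideg Adj S v ≤ Δ₀ ^ 2) →
      ColOn Adj S (Δ₀ - 1) := fun S hS => bridge Δ₀ h hDF S hS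
  -- the quantities of the core/partition skeleton
  set d : ℕ := Δ / K with hd
  set q : ℕ := d + 1 with hq
  set β : ℕ := Δ - q with hβ
  have hqq : q = Δ / K + 1 := by rw [hq, hd]
  have hβbound : (β:ℝ) ≤ (1 - 1/(K:ℝ)) * Δ := beta_bound hKpos hqq hβ
  -- the core/partition skeleton
  have hskel : ∃ kk : ℕ, dichromNum Adj ≤ max β (kk * (Δ₀ - 1)) ∧
      (2 ≤ Δ₀ → K < Δ → (kk:ℝ) * ((Δ₀:ℝ) - 1) ≤ (1 - 1/(K:ℝ)) * Δ) := by
    obtain ⟨T, hTsub, hTdeg, hTcol⟩ :=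
      core_exists hDF β (Set.univ : Set V).ncard Set.univ le_rfl
    set F : V → ℕ := fun v => if v ∈ T then odeg Adj T v + ideg Adj T v else 0
      with hFdef
    set M : ℕ := Finset.univ.sup F with hMdef
    set kk : ℕ := M / (2*Δ₀+1) + 1 with hkkdef
    have hkkpos : 0 < kk := Nat.succ_pos _
    have hMb : ∀ v ∈ T, odeg Adj T v + ideg Adj T v ≤ M := by
      intro v hv
      have h1 : F v ≤ M := Finset.le_sup (Finset.mem_univ v)
      rw [hFdef] at h1
      simpa [hv] using h1
    have hdeg' : ∀ v ∈ T, odeg Adj T v + ideg Adj T v + 1 ≤ kk * (2*Δ₀+1) := by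
      intro v hv
      have h1 := hMb v hv
      have hmod : M % (2*Δ₀+1) < 2*Δ₀+1 := Nat.mod_lt M (by omega)
      have h2 : M < kk * (2*Δ₀+1) := by
        rw [hkkdef]
        calc M = (2*Δ₀+1) * (M / (2*Δ₀+1)) + M % (2*Δ₀+1) :=
              (Nat.div_add_mod _ _).symm
          _ < (2*Δ₀+1) * (M / (2*Δ₀+1)) + (2*Δ₀+1) := Nat.add_lt_add_left hmod _
          _ = (M / (2*Δ₀+1) + 1) * (2*Δ₀+1) := by ring
      omega
    obtain ⟨g, hg⟩ := partition_lemma hDF T kk (2*Δ₀) hkkpos hdeg'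
    have hparts : ∀ c : Fin kk, ColOn Adj (T ∩ {u | g u = c}) (Δ₀ - 1) := by
      intro c
      apply E'
      intro v hv
      have hgv : g v = c := hv.2
      have h1 := hg v hv.1
      rw [hgv] at h1
      exact amgm_nat h1
    have hdisj : ∀ c ∈ Finset.univ, ∀ c' ∈ Finset.univ, c ≠ c' →
        Disjoint (T ∩ {u | g u = c}) (T ∩ {u | g u = c'}) := by
      intro c _ c' _ hne
      rw [Set.disjoint_left]
      rintro u ⟨-, h1⟩ ⟨-, h2⟩
      exact hne (h1 ▸ h2 ▸ rfl)
    have hbig := colOn_biUnion Finset.univ (fun c => T ∩ {u | g u = c}) (Δ₀ - 1)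
      hdisj (fun c _ => hparts c)
    have hTsub2 : T ⊆ ⋃ c ∈ (Finset.univ : Finset (Fin kk)), T ∩ {u | g u = c} := by
      intro v hv
      exact Set.mem_iUnion₂.mpr ⟨g v, Finset.mem_univ _, hv, rfl⟩
    have hTcolored : ColOn Adj T (kk * (Δ₀ - 1)) := by
      have h1 := colOn_anti hTsub2 hbig
      rwa [Finset.card_univ, Fintype.card_fin] at h1
    have hfin : ColOn Adj Set.univ (max β (kk * (Δ₀-1))) := hTcol _ hTcolored
    refine ⟨kk, dichromNum_le_of_colOn hfin, ?_⟩
    intro hΔ₀2 hKΔ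
    -- numeric bounds
    have hK20 : 20 ≤ K := by rw [hKdef]; nlinarith
    have hd20 : d ≤ Δ / 20 := by rw [hd]; exact Nat.div_le_div_left hK20 (by norm_num)
    have hΔ21 : 21 ≤ Δ := by omega
    have hq2 : q + 1 ≤ Δ := by
      have h2 : Δ / 20 + 2 ≤ Δ := by omega
      omega
    have hβ1 : 1 ≤ β := by omega
    have hMbound : M ≤ Δ + Δ * Δ / β := by
      rw [hMdef]
      apply Finset.sup_le
      intro v _
      rw [hFdef]
      by_cases hv : v ∈ T
      · simp only [if_pos hv]
        exact tot_bound (hTdeg v hv).1 (hTdeg v hv).2 (hprodS T v hv) hβ1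
      · simp only [if_neg hv]
        exact Nat.zero_le _
    -- move to the reals
    have hx : (2:ℝ) ≤ (Δ₀:ℝ) := by exact_mod_cast hΔ₀2
    have hKR : (K:ℝ) = ((Δ₀:ℝ) + 2) * (2*(Δ₀:ℝ) + 1) := by
      rw [hKdef]; push_cast; ring
    have hD : (K:ℝ) + 1 ≤ (Δ:ℝ) := by exact_mod_cast hKΔ
    have hdR : (d:ℝ) ≤ (Δ:ℝ)/(K:ℝ) := by rw [hd]; exact Nat.cast_div_le
    have hone : (1:ℝ) ≤ (Δ:ℝ)/(K:ℝ) := by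
      rw [le_div_iff₀ hKRpos]
      linarith
    have hcastβ : (β:ℝ) = (Δ:ℝ) - (d:ℝ) - 1 := by
      rw [hβ, hq]
      have hqΔ : d + 1 ≤ Δ := by omega
      push_cast [hqΔ]
      ring
    have hbR : (Δ:ℝ) * (1 - 2/(K:ℝ)) ≤ (β:ℝ) := by
      have key : (Δ:ℝ) * (1 - 2/(K:ℝ)) = (Δ:ℝ) - 2 * ((Δ:ℝ)/(K:ℝ)) := by ring
      rw [key, hcastβ]
      linarith
    have hmR : (M:ℝ) ≤ (Δ:ℝ) + (Δ:ℝ)*(Δ:ℝ)/(β:ℝ) := by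
      have h1 : (M:ℝ) ≤ ((Δ + Δ*Δ/β : ℕ):ℝ) := by exact_mod_cast hMbound
      have h2 : ((Δ*Δ/β : ℕ):ℝ) ≤ ((Δ*Δ : ℕ):ℝ)/(β:ℝ) := Nat.cast_div_le
      push_cast at h1 h2 ⊢
      linarith
    have hkR : (kk:ℝ) ≤ (M:ℝ)/(2*(Δ₀:ℝ)+1) + 1 := by
      rw [hkkdef]
      have h1 : ((M / (2*Δ₀+1) : ℕ):ℝ) ≤ (M:ℝ)/((2*Δ₀+1 : ℕ):ℝ) := Nat.cast_div_le
      push_cast at h1 ⊢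
      linarith
    exact numeric_main hx hKR hD hbR hmR hkR
  -- finish, splitting into the three cases
  rcases le_or_gt 2 Δ₀ with hΔ₀2 | hΔ₀small
  · rcases le_or_gt Δ K with hsmall | hbig
    · -- middle range : peeling
      have hcol := peel hDF Δ₀ E' hΔ₀2 Δ hge Set.univ
        (fun v _ => by rw [pow_two]; exact hprodS Set.univ v (Set.mem_univ v))
      have hchrom := dichromNum_le_of_colOn hcol
      have hΔ2 : 2 ≤ Δ := le_trans hΔ₀2 hge
      have h1 : (dichromNum Adj : ℝ) ≤ (Δ:ℝ) - 1 := by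
        have := (Nat.cast_le (α := ℝ)).mpr hchrom
        push_cast [show 1 ≤ Δ by omega] at this
        linarith
      have h2 : (Δ:ℝ)/(K:ℝ) ≤ 1 := by
        rw [div_le_one hKRpos]
        exact_mod_cast hsmall
      have h3 : (1 - 1/(K:ℝ)) * Δ = (Δ:ℝ) - (Δ:ℝ)/(K:ℝ) := by
        field_simp
      linarith
  -- large range : skeleton
    · obtain ⟨kk, h1, h2⟩ := hskel
      have h2' := h2 hΔ₀2 hbig
      have hcast : (dichromNum Adj : ℝ) ≤ max (β:ℝ) ((kk * (Δ₀-1) : ℕ):ℝ) := by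
        have := (Nat.cast_le (α := ℝ)).mpr h1
        rwa [Nat.cast_max] at this
      have hsecond : ((kk * (Δ₀-1) : ℕ):ℝ) ≤ (1 - 1/(K:ℝ)) * Δ := by
        have hc : ((kk * (Δ₀-1) : ℕ):ℝ) = (kk:ℝ) * ((Δ₀:ℝ) - 1) := by
          push_cast [show 1 ≤ Δ₀ by omega]
          ring
        rw [hc]
        exact h2'
      exact le_trans hcast (max_le hβbound hsecond)
  · -- Δ₀ ≤ 1 : skeleton with zero-cost parts
    obtain ⟨kk, h1, -⟩ := hskel
    have hz : kk * (Δ₀ - 1) = 0 := by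
      have : Δ₀ - 1 = 0 := by omega
      rw [this, Nat.mul_zero]
    rw [hz, Nat.max_eq_left (Nat.zero_le β)] at h1
    have hcast : (dichromNum Adj : ℝ) ≤ (β:ℝ) := by exact_mod_cast h1
    linarith

/-- **Corollary.** Suppose `Δ₀` is an integer such that every digon-free digraph `D` with
`⌈Δ̃(D)⌉ = Δ₀` satisfies `χ(D) ≤ Δ₀ - 1`.  Then there exists a positive constant `α < 1`
such that every digon-free digraph `D` with `⌈Δ̃(D)⌉ ≥ Δ₀` satisfies `χ(D) ≤ α ⌈Δ̃(D)⌉`. -/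
theorem stmt_10 (Δ₀ : ℕ)
    (h : ∀ (V : Type) [Fintype V] (Adj : V → V → Prop),
      DigonFree Adj → ⌈tildeDelta Adj⌉₊ = Δ₀ → dichromNum Adj ≤ Δ₀ - 1) :
    ∃ α : ℝ, 0 < α ∧ α < 1 ∧
      ∀ (V : Type) [Fintype V] (Adj : V → V → Prop),
        DigonFree Adj → Δ₀ ≤ ⌈tildeDelta Adj⌉₊ →
        (dichromNum Adj : ℝ) ≤ α * ⌈tildeDelta Adj⌉₊ := by
  have hK2 : (2:ℝ) ≤ (((Δ₀ + 2) * (2 * Δ₀ + 1) : ℕ) : ℝ) := by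
    have : 2 ≤ (Δ₀ + 2) * (2 * Δ₀ + 1) := by nlinarith
    exact_mod_cast this
  refine ⟨1 - 1 / (((Δ₀ + 2) * (2 * Δ₀ + 1) : ℕ) : ℝ), ?_, ?_, ?_⟩
  · have h1 : 1 / (((Δ₀ + 2) * (2 * Δ₀ + 1) : ℕ) : ℝ) ≤ 1/2 := by
      apply one_div_le_one_div_of_le
      · norm_num
      · exact hK2
    linarith
  · have h1 : 0 < 1 / (((Δ₀ + 2) * (2 * Δ₀ + 1) : ℕ) : ℝ) := by
      apply one_div_pos.mpr
      linarith
    linarith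
  · intro V _ Adj hDF hge
    exact main_bound Δ₀ h Adj hDF hge

end MainProof
end

section
/- There exists a 3-regular digraph D on 7 vertices without digons such that χ(D) = 3 (so the bound χ(D) ≤ ⌈Δ̃(D)⌉ is tight for ⌈Δ̃⌉ = 3). -/
/-- The Paley tournament on 7 vertices. -/
def paleyAdj (a b : Fin 7) : Prop := b - a = 1 ∨ b - a = 2 ∨ b - a = 4

instance : DecidableRel paleyAdj := fun a b => by unfold paleyAdj; infer_instance

lemma acyclic_of_rank {V : Type*} (Adj : V → V → Prop) (A : Set V) (r : V → ℕ)
    (h : ∀ x y, x ∈ A → y ∈ A → Adj x y → r x < r y) : AcyclicSet Adj A := by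
  intro v _ hcyc
  have key : ∀ w, Relation.TransGen (fun x y => x ∈ A ∧ y ∈ A ∧ Adj x y) v w → r v < r w := by
    intro w hw
    induction hw with
    | single h' => exact h _ _ h'.1 h'.2.1 h'.2.2
    | tail _ h' ih => exact ih.trans (h _ _ h'.1 h'.2.1 h'.2.2)
  exact lt_irrefl _ (key v hcyc)

lemma diColorable_mono {V : Type*} (Adj : V → V → Prop) {k m : ℕ} (h : k ≤ m) :
    DiColorable Adj k → DiColorable Adj m := by
  rintro ⟨f, hf⟩
  refine ⟨fun v => Fin.castLE h (f v), fun i v hv hT => ?_⟩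
  refine hf (f v) v rfl (Relation.TransGen.mono ?_ _ _ hT)
  rintro x y ⟨hx, hy, hxy⟩
  have hx' : f x = f v := Fin.castLE_injective h (hx.trans hv.symm)
  have hy' : f y = f v := Fin.castLE_injective h (hy.trans hv.symm)
  exact ⟨hx', hy', hxy⟩

set_option maxRecDepth 100000 in
lemma paley_mono_triangle : ∀ f : Fin 7 → Fin 2, ∃ a b c, f a = f b ∧ f b = f c ∧
    paleyAdj a b ∧ paleyAdj b c ∧ paleyAdj c a := by decide

lemma paley_not_two : ¬ DiColorable paleyAdj 2 := by
  rintro ⟨f, hf⟩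
  obtain ⟨a, b, c, hab, hbc, h1, h2, h3⟩ := paley_mono_triangle f
  have ha : a ∈ {v | f v = f a} := rfl
  have hb : b ∈ {v | f v = f a} := hab.symm
  have hc : c ∈ {v | f v = f a} := (hab.trans hbc).symm
  exact hf (f a) a ha
    ((Relation.TransGen.single ⟨ha, hb, h1⟩).tail ⟨hb, hc, h2⟩ |>.tail ⟨hc, ha, h3⟩)

lemma paley_rank : ∀ (i : Fin 3) (x y : Fin 7),
    (![0,0,0,1,1,1,2] : Fin 7 → Fin 3) x = i → (![0,0,0,1,1,1,2] : Fin 7 → Fin 3) y = i →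
    paleyAdj x y → x.val < y.val := by decide

lemma paley_three : DiColorable paleyAdj 3 :=
  ⟨![0,0,0,1,1,1,2], fun i => acyclic_of_rank _ _ Fin.val
    (fun x y hx hy h => paley_rank i x y hx hy h)⟩

lemma paley_deg : ∀ v : Fin 7,
    Fintype.card {u // paleyAdj v u} = 3 ∧ Fintype.card {u // paleyAdj u v} = 3 := by decide

/-- There exists a 3-regular digraph on 7 vertices without digons whose chromatic number
equals 3 (so the bound `χ(D) ≤ ⌈Δ̃(D)⌉` is tight for `⌈Δ̃⌉ = 3`). -/
theorem stmt_15 :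
    ∃ Adj : Fin 7 → Fin 7 → Prop,
      DigonFree Adj ∧
      (∀ v, outDeg Adj v = 3 ∧ inDeg Adj v = 3) ∧
      dichromNum Adj = 3 := by
  refine ⟨paleyAdj, by unfold DigonFree; decide, fun v => ?_, ?_⟩
  · have := paley_deg v
    rw [outDeg, inDeg, Nat.card_eq_fintype_card, Nat.card_eq_fintype_card]
    exact this
  · apply le_antisymm
    · exact Nat.sInf_le paley_three
    · refine le_csInf ⟨3, paley_three⟩ (fun k hk => ?_)
      by_contra h
      push_neg at h
      exact paley_not_two (diColorable_mono _ (Nat.lt_succ_iff.mp h) hk)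
end

section
/- Every tournament on 9 vertices is 3-colorable, i.e., its vertex set can be partitioned into 3 acyclic sets. -/
open Classical

lemma trans_list {V : Type} [DecidableEq V] (Adj : V → V → Prop)
    (htour : ∀ u v : V, u ≠ v → (Adj u v ↔ ¬ Adj v u)) :
    ∀ (k : ℕ) (S : Finset V), 2 ^ k ≤ S.card →
      ∃ l : List V, l.Pairwise Adj ∧ l.length = k + 1 ∧ ∀ x ∈ l, x ∈ S := by
  intro k
  induction k with
  | zero =>
    intro S hS
    obtain ⟨v, hv⟩ := Finset.card_pos.mp (by simpa using hS)
    exact ⟨[v], by simp, rfl, by simpa using hv⟩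
  | succ k ih =>
    intro S hS
    have hpos : 0 < S.card := lt_of_lt_of_le (Nat.pow_pos (by norm_num)) hS
    obtain ⟨v, hv⟩ := Finset.card_pos.mp hpos
    set Out := S.filter (fun u => Adj v u) with hOut
    set Inn := S.filter (fun u => Adj u v) with hInn
    have hcover : S.erase v ⊆ Out ∪ Inn := by
      intro u hu
      have huS := Finset.mem_of_mem_erase hu
      have hne : u ≠ v := Finset.ne_of_mem_erase hu
      rcases Classical.em (Adj v u) with h | h
      · exact Finset.mem_union_left _ (Finset.mem_filter.mpr ⟨huS, h⟩)
      · exact Finset.mem_union_right _ (Finset.mem_filter.mpr ⟨huS, (htour u v hne).mpr h⟩)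
    have hOI : S.card - 1 ≤ Out.card + Inn.card := by
      have h1 : (S.erase v).card = S.card - 1 := Finset.card_erase_of_mem hv
      have h2 : (S.erase v).card ≤ (Out ∪ Inn).card := Finset.card_le_card hcover
      have h3 : (Out ∪ Inn).card ≤ Out.card + Inn.card := Finset.card_union_le _ _
      omega
    have hkey : 2 ^ k ≤ Out.card ∨ 2 ^ k ≤ Inn.card := by
      by_contra hcon
      push_neg at hcon
      have := pow_succ 2 k
      omega
    rcases hkey with h | h
    · obtain ⟨l, hp, hlen, hmem⟩ := ih Out h
      refine ⟨v :: l, ?_, by simp [hlen], ?_⟩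
      · refine List.Pairwise.cons ?_ hp
        intro x hx
        exact (Finset.mem_filter.mp (hmem x hx)).2
      · intro x hx
        rcases List.mem_cons.mp hx with rfl | hx
        · exact hv
        · exact Finset.mem_of_mem_filter _ (hmem x hx)
    · obtain ⟨l, hp, hlen, hmem⟩ := ih Inn h
      refine ⟨l ++ [v], ?_, by simp [hlen], ?_⟩
      · rw [List.pairwise_append]
        refine ⟨hp, by simp, ?_⟩
        intro x hx y hy
        rcases List.mem_singleton.mp hy with rfl
        exact (Finset.mem_filter.mp (hmem x hx)).2
      · intro x hx
        rcases List.mem_append.mp hx with hx | hx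
        · exact Finset.mem_of_mem_filter _ (hmem x hx)
        · rcases List.mem_singleton.mp hx with rfl; exact hv

lemma idx_lt {V : Type} [DecidableEq V] (Adj : V → V → Prop)
    (hloopless : ∀ v, ¬ Adj v v)
    (htour : ∀ u v : V, u ≠ v → (Adj u v ↔ ¬ Adj v u))
    (l : List V) (hp : l.Pairwise Adj) {x y : V} (hx : x ∈ l) (hy : y ∈ l)
    (hxy : Adj x y) : l.idxOf x < l.idxOf y := by
  have hnd : l.Nodup := hp.imp (fun {a b} h => by rintro rfl; exact hloopless _ h)
  by_contra hle
  push_neg at hle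
  have hne : x ≠ y := by rintro rfl; exact hloopless _ hxy
  rcases lt_or_eq_of_le hle with hlt | heq
  · have hgy : l.get ⟨l.idxOf y, List.idxOf_lt_length_iff.mpr hy⟩ = y := List.idxOf_get _
    have hgx : l.get ⟨l.idxOf x, List.idxOf_lt_length_iff.mpr hx⟩ = x := List.idxOf_get _
    have := (List.pairwise_iff_get.mp hp) ⟨l.idxOf y, List.idxOf_lt_length_iff.mpr hy⟩
      ⟨l.idxOf x, List.idxOf_lt_length_iff.mpr hx⟩ hlt
    rw [hgy, hgx] at this
    exact ((htour x y hne).mp hxy) this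
  · exact hne (by
      have hgy : l.get ⟨l.idxOf y, List.idxOf_lt_length_iff.mpr hy⟩ = y := List.idxOf_get _
      have hgx : l.get ⟨l.idxOf x, List.idxOf_lt_length_iff.mpr hx⟩ = x := List.idxOf_get _
      rw [← hgx, ← hgy]
      congr 1
      exact Fin.ext heq.symm)

lemma acyclic_of_sublist {V : Type} [DecidableEq V] (Adj : V → V → Prop)
    (hloopless : ∀ v, ¬ Adj v v)
    (htour : ∀ u v : V, u ≠ v → (Adj u v ↔ ¬ Adj v u))
    (l : List V) (hp : l.Pairwise Adj) (A : Set V) (hA : ∀ v ∈ A, v ∈ l) :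
    AcyclicSet Adj A := by
  intro v hv hT
  have h2 : Relation.TransGen (fun x y : V => l.idxOf x < l.idxOf y) v v := by
    refine Relation.TransGen.mono ?_ _ _ hT
    rintro x y ⟨hxA, hyA, hxy⟩
    exact idx_lt Adj hloopless htour l hp (hA x hxA) (hA y hyA) hxy
  have ht : Transitive (fun x y : V => l.idxOf x < l.idxOf y) :=
    fun a b c hab hbc => lt_trans hab hbc
  rw [@Relation.transGen_eq_self _ _ ⟨ht⟩] at h2
  exact lt_irrefl _ h2

/-- Every tournament on 9 vertices is 3-colorable: its vertex set can be partitioned into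
3 acyclic sets. -/
theorem stmt_16 {V : Type} [Fintype V] (hcard : Fintype.card V = 9)
    (Adj : V → V → Prop)
    (hloopless : ∀ v, ¬ Adj v v)
    (htour : ∀ u v : V, u ≠ v → (Adj u v ↔ ¬ Adj v u)) :
    DiColorable Adj 3 := by
  classical
  have huniv : (Finset.univ : Finset V).card = 9 := by simpa using hcard
  obtain ⟨l1, hp1, hlen1, hmem1⟩ := trans_list Adj htour 3 Finset.univ (by omega)
  have hnd1 : l1.Nodup := hp1.imp (fun {a b} h => by rintro rfl; exact hloopless _ h)
  set S2 : Finset V := Finset.univ \ l1.toFinset with hS2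
  have hc1 : l1.toFinset.card = 4 := by
    rw [List.toFinset_card_of_nodup hnd1, hlen1]
  have hcS2 : S2.card = 5 := by
    rw [hS2, Finset.card_sdiff_of_subset (Finset.subset_univ _), huniv, hc1]
  obtain ⟨l2, hp2, hlen2, hmem2⟩ := trans_list Adj htour 2 S2 (by omega)
  have hnd2 : l2.Nodup := hp2.imp (fun {a b} h => by rintro rfl; exact hloopless _ h)
  set S3 : Finset V := S2 \ l2.toFinset with hS3
  have hsub2 : l2.toFinset ⊆ S2 := by
    intro x hx; exact hmem2 x (List.mem_toFinset.mp hx)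
  have hc2 : l2.toFinset.card = 3 := by
    rw [List.toFinset_card_of_nodup hnd2, hlen2]
  have hcS3 : S3.card = 2 := by
    rw [hS3, Finset.card_sdiff_of_subset hsub2, hcS2, hc2]
  obtain ⟨l3, hp3, hlen3, hmem3⟩ := trans_list Adj htour 1 S3 (by omega)
  have hnd3 : l3.Nodup := hp3.imp (fun {a b} h => by rintro rfl; exact hloopless _ h)
  have hsub3 : S3 ⊆ l3.toFinset := by
    refine Finset.subset_of_eq (Finset.eq_of_subset_of_card_le
      (fun x hx => hmem3 x (List.mem_toFinset.mp hx)) ?_).symm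
    rw [List.toFinset_card_of_nodup hnd3, hlen3, hcS3]
  refine ⟨fun v => if v ∈ l1 then 0 else if v ∈ l2 then 1 else 2, ?_⟩
  intro i
  fin_cases i
  · refine acyclic_of_sublist Adj hloopless htour l1 hp1 _ ?_
    intro v hv
    simp only [Set.mem_setOf_eq] at hv
    by_contra h
    rw [if_neg h] at hv
    split_ifs at hv <;> simp_all
  · refine acyclic_of_sublist Adj hloopless htour l2 hp2 _ ?_
    intro v hv
    simp only [Set.mem_setOf_eq] at hv
    by_contra h
    split_ifs at hv <;> simp_all
  · refine acyclic_of_sublist Adj hloopless htour l3 hp3 _ ?_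
    intro v hv
    simp only [Set.mem_setOf_eq] at hv
    split_ifs at hv with h1 h2
    · simp_all
    · simp_all
    · refine List.mem_toFinset.mp (hsub3 ?_)
      rw [hS3, hS2]
      simp only [Finset.mem_sdiff, Finset.mem_univ, true_and, List.mem_toFinset]
      exact ⟨h1, h2⟩
end
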